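/- Let G be an abelian group of order 2n, E a subgroup of index 2, O = G \ E, and x, y ∈ E with x ∉ {y, -y}. Then the number of common edges of the Cayley graphs G_x and G_y is at most 2·r(E), where r(E) = |{e ∈ E : 2e = 0}|. -/

import Mathlib

/-- The Cayley graph `G_S` on the nontrivial coset `O = G \ H` of an index-2 subgroup
`H`: vertices are the elements of `O`, and `{y, z}` (with `y ≠ z`) is an edge iff
`y + z ∈ S` or `y - z ∈ S` or `z - y ∈ S`. -/
def cayley {G : Type*} [AddCommGroup G] (H : AddSubgroup G) (S : Set G) :
    SimpleGraph {g : G // g ∉ H} where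
  Adj y z := y ≠ z ∧ ((y : G) + z ∈ S ∨ (y : G) - z ∈ S ∨ (z : G) - y ∈ S)
  symm := by
    constructor
    rintro y z ⟨h1, h2⟩
    refine ⟨h1.symm, ?_⟩
    rcases h2 with h | h | h
    · exact Or.inl (by rwa [add_comm])
    · exact Or.inr (Or.inr h)
    · exact Or.inr (Or.inl h)
  loopless := by constructor; rintro y ⟨h1, _⟩; exact h1 rfl

/-- For `x, y ∈ E` with `x ∉ {y, -y}`, the Cayley graphs `G_x` and `G_y`
on `O = G \ E` have at most `2·r(E)` common edges, where `r(E) = |{e ∈ E : 2e = 0}|`. -/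
theorem stmt13 {G : Type*} [AddCommGroup G] [Fintype G] {n : ℕ}
    (hn : Fintype.card G = 2 * n) (E : AddSubgroup G) (hE : E.index = 2)
    (x y : G) (hx : x ∈ E) (hy : y ∈ E) (hxy1 : x ≠ y) (hxy2 : x ≠ -y) :
    ((cayley E {x}).edgeSet ∩ (cayley E {y}).edgeSet).ncard ≤
      2 * {e ∈ (E : Set G) | e + e = 0}.ncard := by
  classical
  set O := {g : G // g ∉ E}
  set C : Set O := {c | (c : G) + c = x + y} with hCdef
  have hmemx : ∀ c : O, x - (c : G) ∉ E := by
    intro c hc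
    exact c.2 (by simpa using E.sub_mem hx hc)
  have hmemy : ∀ c : O, y - (c : G) ∉ E := by
    intro c hc
    exact c.2 (by simpa using E.sub_mem hy hc)
  set f1 : O → Sym2 O := fun c => s(c, ⟨x - (c : G), hmemx c⟩) with hf1
  set f2 : O → Sym2 O := fun c => s(c, ⟨y - (c : G), hmemy c⟩) with hf2
  have hsub : (cayley E {x}).edgeSet ∩ (cayley E {y}).edgeSet ⊆ f1 '' C ∪ f2 '' C := by
    rintro e ⟨he1, he2⟩
    induction e using Sym2.ind with
    | _ a b =>
      rw [SimpleGraph.mem_edgeSet] at he1 he2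
      obtain ⟨hab, h1⟩ := he1
      obtain ⟨-, h2⟩ := he2
      simp only [Set.mem_singleton_iff] at h1 h2
      have swap1 : ∀ c : O, s(a, b) = s(b, a) := fun _ => Sym2.eq_swap
      rcases h1 with h1 | h1 | h1 <;> rcases h2 with h2 | h2 | h2
      · exact absurd (h1.symm.trans h2) hxy1
      · -- a+b=x, a-b=y : c = a
        refine Or.inl ⟨a, by rw [hCdef]; simp only [Set.mem_setOf_eq]; rw [← h1, ← h2]; abel, ?_⟩
        have hb : (⟨x - (a : G), hmemx a⟩ : O) = b :=
          Subtype.ext (show x - (a : G) = (b : G) by rw [← h1]; abel)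
        rw [hf1]; simp only; rw [hb]
      · -- a+b=x, b-a=y : c = b
        refine Or.inl ⟨b, by rw [hCdef]; simp only [Set.mem_setOf_eq]; rw [← h1, ← h2]; abel, ?_⟩
        have hb : (⟨x - (b : G), hmemx b⟩ : O) = a :=
          Subtype.ext (show x - (b : G) = (a : G) by rw [← h1]; abel)
        rw [hf1]; simp only; rw [hb, Sym2.eq_swap]
      · -- a-b=x, a+b=y : c = a
        refine Or.inr ⟨a, by rw [hCdef]; simp only [Set.mem_setOf_eq]; rw [← h1, ← h2]; abel, ?_⟩
        have hb : (⟨y - (a : G), hmemy a⟩ : O) = b :=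
          Subtype.ext (show y - (a : G) = (b : G) by rw [← h2]; abel)
        rw [hf2]; simp only; rw [hb]
      · exact absurd (h1.symm.trans h2) hxy1
      · exact absurd (by rw [← h1, ← h2]; abel : x = -y) hxy2
      · -- b-a=x, a+b=y : c = b
        refine Or.inr ⟨b, by rw [hCdef]; simp only [Set.mem_setOf_eq]; rw [← h1, ← h2]; abel, ?_⟩
        have hb : (⟨y - (b : G), hmemy b⟩ : O) = a :=
          Subtype.ext (show y - (b : G) = (a : G) by rw [← h2]; abel)
        rw [hf2]; simp only; rw [hb, Sym2.eq_swap]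
      · exact absurd (by rw [← h1, ← h2]; abel : x = -y) hxy2
      · exact absurd (h1.symm.trans h2) hxy1
  have hCle : C.ncard ≤ {e ∈ (E : Set G) | e + e = 0}.ncard := by
    rcases C.eq_empty_or_nonempty with h | ⟨c₀, hc₀⟩
    · simp [h]
    · refine Set.ncard_le_ncard_of_injOn (fun c : O => (c : G) - c₀) ?_ ?_ (Set.toFinite _)
      · intro c hc
        refine ⟨?_, ?_⟩
        · show (c : G) - c₀ ∈ E
          rw [sub_eq_add_neg]
          refine (AddSubgroup.add_mem_iff_of_index_two hE).2 ?_
          simp only [neg_mem_iff]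
          exact iff_of_false c.2 c₀.2
        · have h1 : (c : G) + c = x + y := hc
          have h2 : (c₀ : G) + c₀ = x + y := hc₀
          have : ((c : G) + c) - ((c₀ : G) + c₀) = 0 := by rw [h1, h2, sub_self]
          calc ((c : G) - c₀) + ((c : G) - c₀) = ((c : G) + c) - ((c₀ : G) + c₀) := by abel
            _ = 0 := this
      · intro u _ v _ huv
        exact Subtype.ext (by have := sub_left_injective huv; exact_mod_cast this)
  calc ((cayley E {x}).edgeSet ∩ (cayley E {y}).edgeSet).ncard
      ≤ (f1 '' C ∪ f2 '' C).ncard := Set.ncard_le_ncard hsub (Set.toFinite _)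
    _ ≤ (f1 '' C).ncard + (f2 '' C).ncard := Set.ncard_union_le _ _
    _ ≤ C.ncard + C.ncard := add_le_add (Set.ncard_image_le (Set.toFinite _))
        (Set.ncard_image_le (Set.toFinite _))
    _ = 2 * C.ncard := (two_mul _).symm
    _ ≤ 2 * {e ∈ (E : Set G) | e + e = 0}.ncard := by omega
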